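/- A simplicial complex K is 1-collapsible if and only if K is the clique complex of a chordal graph. -/

import Mathlib

open Finset

variable {V : Type*} [DecidableEq V]

/-- An (abstract, finite) simplicial complex: a set system closed under taking subsets. -/
def IsComplex (K : Finset (Finset V)) : Prop :=
  ∀ σ ∈ K, ∀ τ ⊆ σ, τ ∈ K

/-- `τ` is the unique maximal face of `K` containing `σ`. -/
def IsTau (K : Finset (Finset V)) (σ τ : Finset V) : Prop :=
  σ ∈ K ∧ τ ∈ K ∧ σ ⊆ τ ∧ ∀ η ∈ K, σ ⊆ η → η ⊆ τ

/-- `σ` is a `d`-collapsible face of `K`: `dim σ ≤ d - 1` (i.e. `σ.card ≤ d`) and `σ`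
is contained in a unique maximal face of `K`. -/
def DCollFace (d : ℕ) (K : Finset (Finset V)) (σ : Finset V) : Prop :=
  σ.card ≤ d ∧ ∃ τ, IsTau K σ τ

/-- The result `K_σ` of the elementary collapse at `σ`: all faces containing `σ` are removed
(they all lie between `σ` and `τ(σ)`). -/
def collapseAt (K : Finset (Finset V)) (σ : Finset V) : Finset (Finset V) :=
  K.filter (fun η => ¬ σ ⊆ η)

/-- One elementary `d`-collapse. -/
def ElemCollapse (d : ℕ) (K K' : Finset (Finset V)) : Prop :=
  ∃ σ, DCollFace d K σ ∧ K' = collapseAt K σ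

/-- `K` `d`-collapses to `L`. -/
def CollapsesTo (d : ℕ) (K L : Finset (Finset V)) : Prop :=
  Relation.ReflTransGen (ElemCollapse d) K L

/-- `K` is `d`-collapsible. -/
def DCollapsible (d : ℕ) (K : Finset (Finset V)) : Prop :=
  CollapsesTo d K ∅

/-- `G` contains an induced cycle of length `n`. -/
def HasInducedCycle {W : Type*} (G : SimpleGraph W) (n : ℕ) : Prop :=
  ∃ f : ZMod n → W, Function.Injective f ∧
    ∀ i j : ZMod n, G.Adj (f i) (f j) ↔ (j = i + 1 ∨ i = j + 1)

/-- A graph is chordal if it has no induced cycle of length at least 4. -/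
def IsChordal {W : Type*} (G : SimpleGraph W) : Prop :=
  ∀ n : ℕ, 4 ≤ n → ¬ HasInducedCycle G n
-- auxiliary: forward direction
def FlagK (K : Finset (Finset V)) : Prop :=
  ∀ σ : Finset V, (∀ v ∈ σ, ({v} : Finset V) ∈ K) →
    (∀ u ∈ σ, ∀ w ∈ σ, u ≠ w → ({u, w} : Finset V) ∈ K) → σ ∈ K

def NoCyc (K : Finset (Finset V)) : Prop :=
  ∀ n : ℕ, 4 ≤ n → ∀ f : ZMod n → V, Function.Injective f →
    ¬ (∀ i j : ZMod n, (f i ≠ f j ∧ ({f i, f j} : Finset V) ∈ K) ↔ (j = i + 1 ∨ i = j + 1))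

lemma zmod_ne_zero {n k : ℕ} (hn : 4 ≤ n) (hk : 0 < k) (hk2 : k < n) : (k : ZMod n) ≠ 0 := by
  haveI : NeZero n := ⟨by omega⟩
  intro h
  rw [ZMod.natCast_eq_zero_iff] at h
  exact absurd (Nat.le_of_dvd hk h) (by omega)

lemma fwd_aux : ∀ m : ℕ, ∀ K : Finset (Finset V), K.card ≤ m → IsComplex K →
    CollapsesTo 1 K ∅ → ∅ ∈ K → FlagK K ∧ NoCyc K := by
  intro m
  induction m with
  | zero =>
      intro K hcard _ _ h0
      rw [Nat.le_zero, Finset.card_eq_zero] at hcard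
      subst hcard; exact absurd h0 (by simp)
  | succ m ih =>
      intro K hcard hc hcol h0
      rcases Relation.ReflTransGen.cases_head hcol with heq | ⟨K', ⟨σ, ⟨hσcard, τ, hvK, hτK, hvτ, hmax⟩, hK'⟩, hcol'⟩
      · subst heq; exact absurd h0 (by simp)
      have hcases : σ = ∅ ∨ ∃ v, σ = {v} := by
        interval_cases h : σ.card
        · exact Or.inl (Finset.card_eq_zero.mp h)
        · exact Or.inr (Finset.card_eq_one.mp h)
      rcases hcases with rfl | ⟨v, rfl⟩
      · -- collapse at ∅ : K is a simplex with top face τ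
        have hall : ∀ η ∈ K, η ⊆ τ := fun η hη => hmax η hη (Finset.empty_subset _)
        constructor
        · intro σ' h1 _
          refine hc τ hτK σ' (fun u hu => ?_)
          exact Finset.singleton_subset_iff.mp (hall _ (h1 u hu))
        · intro n hn f hinj hiff
          haveI : NeZero n := ⟨by omega⟩
          have hone : (1 : ZMod n) ≠ 0 := by
            have := zmod_ne_zero (k := 1) hn (by norm_num) (by omega); simpa using this
          have htwo : (2 : ZMod n) ≠ 0 := by
            have := zmod_ne_zero (k := 2) hn (by norm_num) (by omega); simpa using this
          have hthree : (3 : ZMod n) ≠ 0 := by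
            have := zmod_ne_zero (k := 3) hn (by norm_num) (by omega); simpa using this
          have hallf : ∀ i : ZMod n, f i ∈ τ := by
            intro i
            have h := (hiff i (i + 1)).mpr (Or.inl rfl)
            have h2 : ({f i, f (i + 1)} : Finset V) ⊆ τ := hall _ h.2
            exact h2 (by simp)
          have hp : ({f 0, f 2} : Finset V) ∈ K := by
            refine hc τ hτK _ ?_
            intro x hx
            simp only [Finset.mem_insert, Finset.mem_singleton] at hx
            rcases hx with rfl | rfl
            exacts [hallf 0, hallf 2]
          have hne : f 0 ≠ f 2 := by
            intro h
            exact htwo (hinj h).symm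
          rcases (hiff 0 2).mp ⟨hne, hp⟩ with h | h
          · exact hone (by linear_combination h)
          · exact hthree (by linear_combination -h)
      · -- collapse at {v}
        have hK'mem : ∀ η, η ∈ K' ↔ η ∈ K ∧ v ∉ η := by
          intro η
          rw [hK']
          simp [collapseAt, Finset.singleton_subset_iff]
        have hsub : K' ⊆ K := fun η h => ((hK'mem η).mp h).1
        have hc' : IsComplex K' := by
          intro η hη τ' hτ'
          rw [hK'mem] at hη ⊢
          exact ⟨hc η hη.1 τ' hτ', fun hvt => hη.2 (hτ' hvt)⟩
        have h0' : ∅ ∈ K' := (hK'mem ∅).mpr ⟨h0, by simp⟩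
        have hlt : K'.card < K.card := by
          apply Finset.card_lt_card
          refine ⟨hsub, fun hKsub => ?_⟩
          have := (hK'mem {v}).mp (hKsub hvK)
          simp at this
        obtain ⟨hFlagK', hNoCyc'⟩ := ih K' (by omega) hc' hcol' h0'
        have hvmem : v ∈ τ := hvτ (Finset.mem_singleton_self v)
        have hnbr : ∀ u, ({v, u} : Finset V) ∈ K → u ∈ τ := by
          intro u h
          exact hmax _ h (Finset.singleton_subset_iff.mpr (by simp)) (by simp)
        constructor
        · intro σ' h1 h2
          by_cases hv' : v ∈ σ'
          · refine hc τ hτK σ' (fun u hu => ?_)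
            by_cases huv : u = v
            · subst huv; exact hvmem
            · exact hnbr u (h2 v hv' u hu (fun h => huv h.symm))
          · apply hsub
            apply hFlagK' σ'
            · intro u hu
              refine (hK'mem _).mpr ⟨h1 u hu, ?_⟩
              simp only [Finset.mem_singleton]
              intro h; exact hv' (h ▸ hu)
            · intro u hu w hw hne
              refine (hK'mem _).mpr ⟨h2 u hu w hw hne, ?_⟩
              simp only [Finset.mem_insert, Finset.mem_singleton]
              rintro (rfl | rfl)
              exacts [hv' hu, hv' hw]
        · intro n hn f hinj hiff
          haveI : NeZero n := ⟨by omega⟩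
          have hone : (1 : ZMod n) ≠ 0 := by
            have := zmod_ne_zero (k := 1) hn (by norm_num) (by omega); simpa using this
          have htwo : (2 : ZMod n) ≠ 0 := by
            have := zmod_ne_zero (k := 2) hn (by norm_num) (by omega); simpa using this
          have hthree : (3 : ZMod n) ≠ 0 := by
            have := zmod_ne_zero (k := 3) hn (by norm_num) (by omega); simpa using this
          by_cases hvf : ∃ i, f i = v
          · obtain ⟨i, hfi⟩ := hvf
            have h1 := (hiff (i - 1) i).mpr (Or.inl (by ring))
            have h2 := (hiff i (i + 1)).mpr (Or.inl rfl)
            have ha : f (i - 1) ∈ τ := by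
              apply hnbr
              rw [Finset.pair_comm, hfi] at h1
              exact h1.2
            have hb : f (i + 1) ∈ τ := by
              apply hnbr
              rw [hfi] at h2
              exact h2.2
            have hp : ({f (i - 1), f (i + 1)} : Finset V) ∈ K := by
              refine hc τ hτK _ ?_
              intro x hx
              simp only [Finset.mem_insert, Finset.mem_singleton] at hx
              rcases hx with rfl | rfl
              exacts [ha, hb]
            have hne : f (i - 1) ≠ f (i + 1) := by
              intro h
              exact htwo (by linear_combination -(hinj h))
            rcases (hiff (i - 1) (i + 1)).mp ⟨hne, hp⟩ with h | h
            · exact hone (by linear_combination h)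
            · exact hthree (by linear_combination -h)
          · push_neg at hvf
            apply hNoCyc' n hn f hinj
            intro i j
            rw [← hiff i j]
            constructor
            · rintro ⟨hne, hp⟩
              exact ⟨hne, hsub hp⟩
            · rintro ⟨hne, hp⟩
              refine ⟨hne, (hK'mem _).mpr ⟨hp, ?_⟩⟩
              simp only [Finset.mem_insert, Finset.mem_singleton]
              rintro (h | h)
              exacts [hvf i h.symm, hvf j h.symm]
-- Reachability within a finite vertex set
def relIn (G : SimpleGraph V) (T : Finset V) (x y : V) : Prop := x ∈ T ∧ y ∈ T ∧ G.Adj x y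

def ReachIn (G : SimpleGraph V) (T : Finset V) (a b : V) : Prop :=
  Relation.ReflTransGen (relIn G T) a b

lemma relIn_symm (G : SimpleGraph V) (T : Finset V) : Symmetric (relIn G T) :=
  fun _ _ ⟨h1, h2, h3⟩ => ⟨h2, h1, h3.symm⟩

lemma ReachIn.symm {G : SimpleGraph V} {T : Finset V} {a b : V} (h : ReachIn G T a b) :
    ReachIn G T b a :=
  (@Relation.ReflTransGen.symmetric _ _ ⟨relIn_symm G T⟩).symm _ _ h

lemma ReachIn.trans {G : SimpleGraph V} {T : Finset V} {a b c : V} (h : ReachIn G T a b)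
    (h' : ReachIn G T b c) : ReachIn G T a c :=
  Relation.ReflTransGen.trans h h'

lemma reach_split_aux {G : SimpleGraph V} {T : Finset V} {z b : V} (hz : z ∉ T) (hb : b ≠ z) :
    ∀ {a}, ReachIn G (insert z T) a b →
      ((a = z → ∃ w, ReachIn G T w b ∧ w ∈ T ∧ G.Adj z w) ∧
       (a ≠ z → ReachIn G T a b ∨
          ((∃ u, ReachIn G T a u ∧ u ∈ T ∧ G.Adj u z) ∧
           (∃ w, ReachIn G T w b ∧ w ∈ T ∧ G.Adj z w)))) := by
  intro a h
  induction h using Relation.ReflTransGen.head_induction_on with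
  | refl => exact ⟨fun h => absurd h hb, fun _ => Or.inl Relation.ReflTransGen.refl⟩
  | @head x c hstep htail ih =>
      obtain ⟨hx, hcmem, hadj⟩ := hstep
      constructor
      · intro hxeq
        have hadj' : G.Adj z c := hxeq ▸ hadj
        have hcz : c ≠ z := by rintro rfl; exact G.loopless.irrefl _ hadj'
        have hcT : c ∈ T := by
          rcases Finset.mem_insert.mp hcmem with h | h
          · exact absurd h hcz
          · exact h
        rcases ih.2 hcz with hr | ⟨_, hw⟩
        · exact ⟨c, hr, hcT, hadj'⟩
        · exact hw
      · intro hxz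
        have hxT : x ∈ T := by
          rcases Finset.mem_insert.mp hx with h | h
          · exact absurd h hxz
          · exact h
        by_cases hcz : c = z
        · subst hcz
          right
          exact ⟨⟨x, Relation.ReflTransGen.refl, hxT, hadj⟩, ih.1 rfl⟩
        · have hcT : c ∈ T := by
            rcases Finset.mem_insert.mp hcmem with h | h
            · exact absurd h hcz
            · exact h
          rcases ih.2 hcz with hr | ⟨⟨u, hu1, hu2, hu3⟩, hw⟩
          · exact Or.inl (Relation.ReflTransGen.head ⟨hxT, hcT, hadj⟩ hr)
          · exact Or.inr ⟨⟨u, Relation.ReflTransGen.head ⟨hxT, hcT, hadj⟩ hu1, hu2, hu3⟩, hw⟩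

lemma reach_split {G : SimpleGraph V} {T : Finset V} {z a b : V} (hz : z ∉ T) (ha : a ≠ z)
    (hb : b ≠ z) (h : ReachIn G (insert z T) a b) :
    ReachIn G T a b ∨
      ((∃ u, ReachIn G T a u ∧ u ∈ T ∧ G.Adj u z) ∧
       (∃ w, ReachIn G T w b ∧ w ∈ T ∧ G.Adj z w)) :=
  (reach_split_aux hz hb h).2 ha

open scoped Classical

/-- walks stay inside the component of the start. -/
lemma reach_filter {G : SimpleGraph V} {T : Finset V} {a : V} :
    ∀ {x}, ReachIn G T a x → ReachIn G (T.filter (fun u => ReachIn G T a u)) a x := by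
  intro x h
  induction h with
  | refl => exact Relation.ReflTransGen.refl
  | tail hyz hstep ih =>
      obtain ⟨hy, hz, hadj⟩ := hstep
      exact Relation.ReflTransGen.tail ih
        ⟨Finset.mem_filter.mpr ⟨hy, ‹_›⟩,
         Finset.mem_filter.mpr ⟨hz, Relation.ReflTransGen.tail ‹_› ⟨hy, hz, hadj⟩⟩, hadj⟩
/-- A walk of length `k` from `x` to `y` whose interior lies in `A`. -/
def IsWk (G : SimpleGraph V) (A : Finset V) (x y : V) (k : ℕ) (g : ℕ → V) : Prop :=
  g 0 = x ∧ g k = y ∧ (∀ t, t < k → G.Adj (g t) (g (t + 1))) ∧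
    ∀ t, 0 < t → t < k → g t ∈ A

lemma reach_toWk {G : SimpleGraph V} {A : Finset V} {u : V} (hu : u ∈ A) :
    ∀ {w}, ReachIn G A u w →
      ∃ (k : ℕ) (g : ℕ → V), g 0 = u ∧ g k = w ∧ (∀ t, t < k → G.Adj (g t) (g (t + 1))) ∧
        ∀ t, t ≤ k → g t ∈ A := by
  intro w h
  induction h with
  | refl => exact ⟨0, fun _ => u, rfl, rfl, by omega, fun t ht => by simpa using hu⟩
  | @tail p q hyp hstep ih =>
      obtain ⟨k, g, hg0, hgk, hadj, hmem⟩ := ih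
      obtain ⟨hpA, hqA, hpq⟩ := hstep
      refine ⟨k + 1, fun t => if t ≤ k then g t else q, ?_, ?_, ?_, ?_⟩
      · show (if 0 ≤ k then g 0 else q) = u
        rw [if_pos (Nat.zero_le k), hg0]
      · show (if k + 1 ≤ k then g (k + 1) else q) = q
        rw [if_neg (by omega)]
      · intro t ht
        show G.Adj (if t ≤ k then g t else q) (if t + 1 ≤ k then g (t + 1) else q)
        by_cases h1 : t + 1 ≤ k
        · rw [if_pos (by omega : t ≤ k), if_pos h1]
          exact hadj t (by omega)
        · have h2 : t = k := by omega
          subst h2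
          rw [if_pos (le_refl t), if_neg h1, hgk]
          exact hpq
      · intro t ht
        show (if t ≤ k then g t else q) ∈ A
        by_cases h1 : t ≤ k
        · rw [if_pos h1]; exact hmem t h1
        · rw [if_neg h1]; exact hqA

lemma exists_minWk {G : SimpleGraph V} {A : Finset V} {x y : V}
    (hex : ∃ k g, IsWk G A x y k g) :
    ∃ k g, IsWk G A x y k g ∧ ∀ k' g', IsWk G A x y k' g' → k ≤ k' := by
  classical
  obtain ⟨k0, g0, h0⟩ := hex
  have hex' : ∃ k, ∃ g, IsWk G A x y k g := ⟨k0, g0, h0⟩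
  obtain ⟨g, hg⟩ := Nat.find_spec hex'
  exact ⟨Nat.find hex', g, hg, fun k' g' h' => Nat.find_min' hex' ⟨g', h'⟩⟩

/-- A minimal walk between nonadjacent distinct endpoints is an induced path. -/
lemma minWk_induced {G : SimpleGraph V} {A : Finset V} {x y : V} {k : ℕ} {g : ℕ → V}
    (hxy : ¬ G.Adj x y) (hne : x ≠ y) (hw : IsWk G A x y k g)
    (hmin : ∀ k' g', IsWk G A x y k' g' → k ≤ k') :
    (∀ s t, s < t → t ≤ k → g s ≠ g t) ∧ (∀ s t, s + 2 ≤ t → t ≤ k → ¬ G.Adj (g s) (g t)) := by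
  obtain ⟨hg0, hgk, hadj, hmem⟩ := hw
  constructor
  · intro s t hst htk heq
    by_cases hst0 : s = 0 ∧ t = k
    · refine hne ?_
      rw [hst0.1] at heq; rw [hst0.2] at heq; rw [hg0, hgk] at heq; exact heq
    have hlt : k - (t - s) < k := by omega
    refine absurd (hmin (k - (t - s)) (fun r => if r ≤ s then g r else g (r + (t - s))) ?_)
      (by omega)
    refine ⟨?_, ?_, ?_, ?_⟩
    · show (if 0 ≤ s then g 0 else _) = x
      rw [if_pos (Nat.zero_le s), hg0]
    · show (if k - (t - s) ≤ s then g (k - (t - s)) else g (k - (t - s) + (t - s))) = y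
      by_cases h1 : k - (t - s) ≤ s
      · have h2 : t = k := by omega
        have h3 : k - (t - s) = s := by omega
        rw [if_pos h1, h3, heq, h2, hgk]
      · rw [if_neg h1, show k - (t - s) + (t - s) = k by omega, hgk]
    · intro r hr
      show G.Adj (if r ≤ s then g r else g (r + (t - s)))
        (if r + 1 ≤ s then g (r + 1) else g (r + 1 + (t - s)))
      by_cases h1 : r + 1 ≤ s
      · rw [if_pos (by omega : r ≤ s), if_pos h1]
        exact hadj r (by omega)
      · by_cases h2 : r ≤ s
        · have h3 : r = s := by omega
          subst h3
          have htk' : t < k := by omega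
          rw [if_pos (le_refl r), if_neg h1, heq, show r + 1 + (t - r) = t + 1 by omega]
          exact hadj t htk'
        · rw [if_neg h2, if_neg (by omega : ¬ r + 1 ≤ s),
            show r + 1 + (t - s) = r + (t - s) + 1 by omega]
          exact hadj _ (by omega)
    · intro r hr0 hrk
      show (if r ≤ s then g r else g (r + (t - s))) ∈ A
      by_cases h1 : r ≤ s
      · rw [if_pos h1]; exact hmem r hr0 (by omega)
      · rw [if_neg h1]; exact hmem _ (by omega) (by omega)
  · intro s t hst htk hadj'
    by_cases hst0 : s = 0 ∧ t = k
    · refine hxy ?_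
      rw [hst0.1] at hadj'; rw [hst0.2] at hadj'; rw [hg0, hgk] at hadj'; exact hadj'
    have hlt : k - (t - s - 1) < k := by omega
    refine absurd (hmin (k - (t - s - 1)) (fun r => if r ≤ s then g r else g (r + (t - s - 1))) ?_)
      (by omega)
    refine ⟨?_, ?_, ?_, ?_⟩
    · show (if 0 ≤ s then g 0 else _) = x
      rw [if_pos (Nat.zero_le s), hg0]
    · show (if k - (t - s - 1) ≤ s then g (k - (t - s - 1))
        else g (k - (t - s - 1) + (t - s - 1))) = y
      rw [if_neg (by omega : ¬ k - (t - s - 1) ≤ s),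
        show k - (t - s - 1) + (t - s - 1) = k by omega, hgk]
    · intro r hr
      show G.Adj (if r ≤ s then g r else g (r + (t - s - 1)))
        (if r + 1 ≤ s then g (r + 1) else g (r + 1 + (t - s - 1)))
      by_cases h1 : r + 1 ≤ s
      · rw [if_pos (by omega : r ≤ s), if_pos h1]
        exact hadj r (by omega)
      · by_cases h2 : r ≤ s
        · have h3 : r = s := by omega
          subst h3
          rw [if_pos (le_refl r), if_neg h1, show r + 1 + (t - r - 1) = t by omega]
          exact hadj'
        · rw [if_neg h2, if_neg (by omega : ¬ r + 1 ≤ s),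
            show r + 1 + (t - s - 1) = r + (t - s - 1) + 1 by omega]
          exact hadj _ (by omega)
    · intro r hr0 hrk
      show (if r ≤ s then g r else g (r + (t - s - 1))) ∈ A
      by_cases h1 : r ≤ s
      · rw [if_pos h1]; exact hmem r hr0 (by omega)
      · rw [if_neg h1]; exact hmem _ (by omega) (by omega)
lemma zmod_succ_iff {n : ℕ} (hn : 4 ≤ n) (i j : ZMod n) :
    j = i + 1 ↔ j.val = (i.val + 1) % n := by
  haveI : NeZero n := ⟨by omega⟩
  haveI : Fact (1 < n) := ⟨by omega⟩
  constructor
  · rintro rfl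
    rw [ZMod.val_add, ZMod.val_one]
  · intro hv
    apply ZMod.val_injective
    rw [ZMod.val_add, ZMod.val_one]
    exact hv

/-- Two induced paths through disjoint, non-adjacent vertex sets produce an induced cycle. -/
lemma no_two_paths {G : SimpleGraph V} (hG : IsChordal G) {A B : Finset V} {x y : V}
    {k l : ℕ} {g h : ℕ → V}
    (hxy : ¬ G.Adj x y) (hne : x ≠ y)
    (hgw : IsWk G A x y k g) (hgmin : ∀ k' g', IsWk G A x y k' g' → k ≤ k')
    (hhw : IsWk G B y x l h) (hhmin : ∀ k' g', IsWk G B y x k' g' → l ≤ k')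
    (hxB : x ∉ B) (hyA : y ∉ A)
    (hAB : ∀ u ∈ A, u ∉ B) (hnoedge : ∀ u ∈ A, ∀ w ∈ B, ¬ G.Adj u w) : False := by
  obtain ⟨hgind, hgchord⟩ := minWk_induced hxy hne hgw hgmin
  obtain ⟨hhind, hhchord⟩ := minWk_induced (fun h' => hxy h'.symm) hne.symm hhw hhmin
  obtain ⟨hg0, hgk, hgadj, hgmem⟩ := hgw
  obtain ⟨hh0, hhl, hhadj, hhmem⟩ := hhw
  have hk2 : 2 ≤ k := by
    rcases Nat.lt_or_ge k 2 with hk | hk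
    · interval_cases k
      · exact absurd (hg0 ▸ hgk) hne
      · exact absurd (hg0 ▸ hgk ▸ hgadj 0 (by omega)) hxy
    · exact hk
  have hl2 : 2 ≤ l := by
    rcases Nat.lt_or_ge l 2 with hl | hl
    · interval_cases l
      · exact absurd (hh0 ▸ hhl) hne.symm
      · exact absurd (hh0 ▸ hhl ▸ hhadj 0 (by omega)) (fun h' => hxy h'.symm)
    · exact hl
  set n := k + l with hn
  have hn4 : 4 ≤ n := by omega
  set c : ℕ → V := fun t => if t ≤ k then g t else h (t - k) with hc
  have hck : ∀ t, t ≤ k → c t = g t := fun t ht => if_pos ht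
  have hch : ∀ t, k ≤ t → c t = h (t - k) := by
    intro t ht
    rcases eq_or_lt_of_le ht with he | ht'
    · rw [hck t (by omega), ← he, Nat.sub_self, hh0, hgk]
    · exact if_neg (by omega)
  -- injectivity of c on [0, n)
  have injc : ∀ s t, s < t → t < n → c s ≠ c t := by
    intro s t hst htn
    by_cases ht : t ≤ k
    · rw [hck s (by omega), hck t ht]
      exact hgind s t hst ht
    · push_neg at ht
      by_cases hs : k ≤ s
      · rw [hch s hs, hch t (by omega)]
        exact hhind (s - k) (t - k) (by omega) (by omega)
      · push_neg at hs
        rw [hck s (by omega), hch t (by omega)]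
        have htB : h (t - k) ∈ B := hhmem (t - k) (by omega) (by omega)
        by_cases hs0 : s = 0
        · subst hs0
          rw [hg0]
          intro heq
          exact hxB (heq ▸ htB)
        · have hsA : g s ∈ A := hgmem s (by omega) (by omega)
          intro heq
          exact hAB _ hsA (heq ▸ htB)
  -- adjacency characterization
  have adjc : ∀ s t, s ≤ t → t < n →
      (G.Adj (c s) (c t) ↔ (t = s + 1 ∨ (s = 0 ∧ t = n - 1))) := by
    intro s t hst htn
    by_cases ht : t ≤ k
    · rw [hck s (by omega), hck t ht]
      constructor
      · intro ha
        rcases Nat.lt_or_ge t (s + 2) with h2 | h2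
        · have : s ≠ t := fun he => G.loopless.irrefl _ (he ▸ ha)
          left; omega
        · exact absurd ha (hgchord s t h2 ht)
      · rintro (rfl | ⟨rfl, rfl⟩)
        · exact hgadj s (by omega)
        · omega
    · push_neg at ht
      by_cases hs : k ≤ s
      · rw [hch s hs, hch t (by omega)]
        constructor
        · intro ha
          rcases Nat.lt_or_ge (t - k) (s - k + 2) with h2 | h2
          · have : s ≠ t := fun he => G.loopless.irrefl _ (he ▸ ha)
            left; omega
          · exact absurd ha (hhchord (s - k) (t - k) h2 (by omega))
        · rintro (rfl | ⟨rfl, _⟩)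
          · rw [show s + 1 - k = s - k + 1 by omega]
            exact hhadj (s - k) (by omega)
          · omega
      · push_neg at hs
        rw [hck s (by omega), hch t (by omega)]
        by_cases hs0 : s = 0
        · subst hs0
          rw [hg0, show x = h l from hhl.symm]
          constructor
          · intro ha
            rcases Nat.lt_or_ge l (t - k + 2) with h2 | h2
            · right; constructor; rfl; omega
            · exact absurd ha.symm (hhchord (t - k) l h2 (le_refl l))
          · rintro (h1 | ⟨_, rfl⟩)
            · omega
            · have := hhadj (l - 1) (by omega)
              rw [show l - 1 + 1 = l by omega] at this
              rw [show n - 1 - k = l - 1 by omega]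
              exact this.symm
        · have hsA : g s ∈ A := hgmem s (by omega) (by omega)
          have htB : h (t - k) ∈ B := hhmem (t - k) (by omega) (by omega)
          constructor
          · intro ha
            exact absurd ha (hnoedge _ hsA _ htB)
          · rintro (rfl | ⟨h1, _⟩)
            · omega
            · omega
  haveI : NeZero n := ⟨by omega⟩
  -- the induced cycle
  refine hG n hn4 ⟨fun i => c i.val, ?_, ?_⟩
  · intro i j hij
    rcases lt_trichotomy i.val j.val with h1 | h1 | h1
    · exact absurd hij (injc _ _ h1 (ZMod.val_lt j))
    · exact ZMod.val_injective n h1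
    · exact absurd hij.symm (injc _ _ h1 (ZMod.val_lt i))
  · intro i j
    rw [zmod_succ_iff hn4 j i, zmod_succ_iff hn4 i j]
    have hi := ZMod.val_lt i
    have hj := ZMod.val_lt j
    rcases le_or_gt i.val j.val with hle | hlt
    · rw [adjc i.val j.val hle hj]
      by_cases he : i.val = j.val
      · constructor
        · rintro (h1 | ⟨h1, h2⟩) <;> omega
        · intro h1
          exfalso
          rcases h1 with h1 | h1
          · rcases Nat.lt_or_ge (i.val + 1) n with h2 | h2
            · rw [Nat.mod_eq_of_lt h2] at h1; omega
            · rw [show i.val + 1 = n by omega, Nat.mod_self] at h1; omega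
          · rcases Nat.lt_or_ge (j.val + 1) n with h2 | h2
            · rw [Nat.mod_eq_of_lt h2] at h1; omega
            · rw [show j.val + 1 = n by omega, Nat.mod_self] at h1; omega
      · constructor
        · rintro (h1 | ⟨h1, h2⟩)
          · left; rw [h1, Nat.mod_eq_of_lt (by omega)]
          · right; rw [h1, h2, show n - 1 + 1 = n by omega, Nat.mod_self]
        · rintro (h1 | h1)
          · rcases Nat.lt_or_ge (i.val + 1) n with h2 | h2
            · rw [Nat.mod_eq_of_lt h2] at h1; left; omega
            · rw [show i.val + 1 = n by omega, Nat.mod_self] at h1; omega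
          · rcases Nat.lt_or_ge (j.val + 1) n with h2 | h2
            · rw [Nat.mod_eq_of_lt h2] at h1; omega
            · rw [show j.val + 1 = n by omega, Nat.mod_self] at h1
              right; constructor <;> omega
    · have hadj' : G.Adj (c i.val) (c j.val) ↔ G.Adj (c j.val) (c i.val) :=
        ⟨fun h' => h'.symm, fun h' => h'.symm⟩
      rw [hadj', adjc j.val i.val (by omega) hi]
      constructor
      · rintro (h1 | ⟨h1, h2⟩)
        · right; rw [h1, Nat.mod_eq_of_lt (by omega)]
        · left; rw [h1, h2, show n - 1 + 1 = n by omega, Nat.mod_self]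
      · rintro (h1 | h1)
        · rcases Nat.lt_or_ge (i.val + 1) n with h2 | h2
          · rw [Nat.mod_eq_of_lt h2] at h1; omega
          · rw [show i.val + 1 = n by omega, Nat.mod_self] at h1
            right; constructor <;> omega
        · rcases Nat.lt_or_ge (j.val + 1) n with h2 | h2
          · rw [Nat.mod_eq_of_lt h2] at h1; left; omega
          · rw [show j.val + 1 = n by omega, Nat.mod_self] at h1; omega
lemma wk_extend {G : SimpleGraph V} {A : Finset V} {x y u1 u2 : V}
    (hu1A : u1 ∈ A) (h1 : G.Adj x u1) (h2 : G.Adj u2 y)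
    (hr : ReachIn G A u1 u2) : ∃ k g, IsWk G A x y k g := by
  obtain ⟨k0, g0, hg00, hg0k, hadj, hmem⟩ := reach_toWk hu1A hr
  refine ⟨k0 + 2, fun t => if t = 0 then x else if t ≤ k0 + 1 then g0 (t - 1) else y, ?_, ?_, ?_, ?_⟩
  · show (if (0 : ℕ) = 0 then x else _) = x
    rw [if_pos rfl]
  · show (if k0 + 2 = 0 then x else if k0 + 2 ≤ k0 + 1 then g0 (k0 + 2 - 1) else y) = y
    rw [if_neg (by omega), if_neg (by omega)]
  · intro t ht
    show G.Adj (if t = 0 then x else if t ≤ k0 + 1 then g0 (t - 1) else y)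
      (if t + 1 = 0 then x else if t + 1 ≤ k0 + 1 then g0 (t + 1 - 1) else y)
    by_cases h0 : t = 0
    · subst h0
      rw [if_pos rfl, if_neg (by omega), if_pos (by omega : (0 : ℕ) + 1 ≤ k0 + 1),
        show (0 + 1 - 1 : ℕ) = 0 from rfl, hg00]
      exact h1
    · by_cases hk : t + 1 ≤ k0 + 1
      · rw [if_neg h0, if_pos (by omega), if_neg (by omega), if_pos hk,
          show t + 1 - 1 = (t - 1) + 1 by omega]
        exact hadj (t - 1) (by omega)
      · rw [if_neg h0, if_pos (by omega : t ≤ k0 + 1), if_neg (by omega), if_neg hk,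
          show t - 1 = k0 by omega, hg0k]
        exact h2
  · intro t ht0 htk
    show (if t = 0 then x else if t ≤ k0 + 1 then g0 (t - 1) else y) ∈ A
    rw [if_neg (by omega), if_pos (by omega)]
    exact hmem (t - 1) (by omega)

/-- `v` is a simplicial vertex of the subgraph induced on `S`. -/
def SimpIn (G : SimpleGraph V) (S : Finset V) (v : V) : Prop :=
  ∀ a ∈ S, ∀ b ∈ S, G.Adj v a → G.Adj v b → a ≠ b → G.Adj a b

/-- Dirac: a finite chordal graph is complete or has two nonadjacent simplicial vertices. -/
lemma dirac {G : SimpleGraph V} (hG : IsChordal G) (S : Finset V) :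
    (∀ x ∈ S, ∀ y ∈ S, x ≠ y → G.Adj x y) ∨
      ∃ v ∈ S, ∃ w ∈ S, v ≠ w ∧ ¬ G.Adj v w ∧ SimpIn G S v ∧ SimpIn G S w := by
  classical
  induction S using Finset.strongInduction with
  | _ S ih =>
  by_cases hcomp : ∀ x ∈ S, ∀ y ∈ S, x ≠ y → G.Adj x y
  · exact Or.inl hcomp
  push_neg at hcomp
  obtain ⟨a, ha, b, hb, hab_ne, hab⟩ := hcomp
  right
  -- a minimum separator C
  have hP0 : ¬ ReachIn G (S \ (S \ {a, b})) a b := by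
    intro hreach
    rcases Relation.ReflTransGen.cases_head hreach with he | ⟨c, ⟨hc1, hc2, hc3⟩, _⟩
    · exact hab_ne he
    · have hcab : c ∈ ({a, b} : Finset V) := by
        rcases Finset.mem_sdiff.mp hc2 with ⟨hcS, hcn⟩
        by_contra hcc
        exact hcn (Finset.mem_sdiff.mpr ⟨hcS, hcc⟩)
      rcases Finset.mem_insert.mp hcab with rfl | hcb
      · exact G.loopless.irrefl _ hc3
      · rw [Finset.mem_singleton] at hcb
        subst hcb
        exact hab hc3
  obtain ⟨C, hCmem, hCmin⟩ := Finset.exists_min_image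
    ((S \ {a, b}).powerset.filter (fun C => ¬ ReachIn G (S \ C) a b)) Finset.card
    ⟨S \ {a, b}, Finset.mem_filter.mpr ⟨Finset.mem_powerset.mpr (le_refl _), hP0⟩⟩
  have hCsub : C ⊆ S \ {a, b} := Finset.mem_powerset.mp (Finset.mem_filter.mp hCmem).1
  have hCS : C ⊆ S := hCsub.trans (Finset.sdiff_subset)
  have hCsep : ¬ ReachIn G (S \ C) a b := (Finset.mem_filter.mp hCmem).2
  set T := S \ C with hT
  have haC : a ∉ C := fun h => by simpa using (Finset.mem_sdiff.mp (hCsub h)).2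
  have hbC : b ∉ C := fun h => by simpa using (Finset.mem_sdiff.mp (hCsub h)).2
  have haT : a ∈ T := Finset.mem_sdiff.mpr ⟨ha, haC⟩
  have hbT : b ∈ T := Finset.mem_sdiff.mpr ⟨hb, hbC⟩
  set A := T.filter (fun u => ReachIn G T a u) with hA
  set B := T.filter (fun u => ReachIn G T b u) with hB
  have haA : a ∈ A := Finset.mem_filter.mpr ⟨haT, Relation.ReflTransGen.refl⟩
  have hbB : b ∈ B := Finset.mem_filter.mpr ⟨hbT, Relation.ReflTransGen.refl⟩
  have hAT : A ⊆ T := Finset.filter_subset _ _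
  have hBT : B ⊆ T := Finset.filter_subset _ _
  have hAB : ∀ u ∈ A, u ∉ B := by
    intro u hu hv
    exact hCsep (((Finset.mem_filter.mp hu).2).trans ((Finset.mem_filter.mp hv).2).symm)
  have hnoedge : ∀ u ∈ A, ∀ w ∈ B, ¬ G.Adj u w := by
    intro u hu w hw hadj
    exact hAB w
      (Finset.mem_filter.mpr ⟨hBT hw,
        ((Finset.mem_filter.mp hu).2).tail ⟨hAT hu, hBT hw, hadj⟩⟩) hw
  -- every separator vertex has neighbours in both components
  have hnbr : ∀ z ∈ C, (∃ u ∈ A, G.Adj z u) ∧ (∃ w ∈ B, G.Adj z w) := by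
    intro z hz
    have hzS : z ∈ S := hCS hz
    have hzab : z ∉ ({a, b} : Finset V) := (Finset.mem_sdiff.mp (hCsub hz)).2
    have hza : a ≠ z := fun h => hzab (by simp [← h])
    have hzb : b ≠ z := fun h => hzab (by simp [← h])
    have hzT : z ∉ T := fun h => (Finset.mem_sdiff.mp h).2 hz
    have hCe : C.erase z ⊆ S \ {a, b} := (Finset.erase_subset _ _).trans hCsub
    have hsmall : (C.erase z).card < C.card := Finset.card_erase_lt_of_mem hz
    have hre : ReachIn G (S \ C.erase z) a b := by
      by_contra hsep
      exact absurd (hCmin _ (Finset.mem_filter.mpr ⟨Finset.mem_powerset.mpr hCe, hsep⟩))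
        (by omega)
    have hins : S \ C.erase z = insert z T := by
      ext u
      simp only [Finset.mem_sdiff, Finset.mem_insert, Finset.mem_erase, hT]
      constructor
      · rintro ⟨hu1, hu2⟩
        by_cases he : u = z
        · exact Or.inl he
        · exact Or.inr ⟨hu1, fun hc => hu2 ⟨he, hc⟩⟩
      · rintro (rfl | ⟨h1, h2⟩)
        · exact ⟨hzS, fun hc => hc.1 rfl⟩
        · exact ⟨h1, fun hc => h2 hc.2⟩
    rw [hins] at hre
    rcases reach_split hzT hza hzb hre with hr | ⟨⟨u, hu1, hu2, hu3⟩, ⟨w, hw1, hw2, hw3⟩⟩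
    · exact absurd hr hCsep
    · exact ⟨⟨u, Finset.mem_filter.mpr ⟨hu2, hu1⟩, hu3.symm⟩,
        ⟨w, Finset.mem_filter.mpr ⟨hw2, hw1.symm⟩, hw3⟩⟩
  -- the separator is a clique
  have hCclique : ∀ x ∈ C, ∀ y ∈ C, x ≠ y → G.Adj x y := by
    intro x hx y hy hne'
    by_contra hxy
    obtain ⟨⟨u1, hu1A, hu1⟩, ⟨w1, hw1B, hw1⟩⟩ := hnbr x hx
    obtain ⟨⟨u2, hu2A, hu2⟩, ⟨w2, hw2B, hw2⟩⟩ := hnbr y hy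
    have hxB : x ∉ B := fun h => (Finset.mem_sdiff.mp (hBT h)).2 hx
    have hyA : y ∉ A := fun h => (Finset.mem_sdiff.mp (hAT h)).2 hy
    have hreachA : ReachIn G A u1 u2 := by
      have h1 : ReachIn G A a u1 := reach_filter (Finset.mem_filter.mp hu1A).2
      have h2 : ReachIn G A a u2 := reach_filter (Finset.mem_filter.mp hu2A).2
      exact h1.symm.trans h2
    have hreachB : ReachIn G B w2 w1 := by
      have h1 : ReachIn G B b w1 := reach_filter (Finset.mem_filter.mp hw1B).2
      have h2 : ReachIn G B b w2 := reach_filter (Finset.mem_filter.mp hw2B).2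
      exact h2.symm.trans h1
    obtain ⟨kA, gA, hgA⟩ := wk_extend hu1A hu1 hu2.symm hreachA
    obtain ⟨kB, gB, hgB⟩ := wk_extend hw2B hw2 hw1.symm hreachB
    obtain ⟨k, g, hgw, hgmin⟩ := exists_minWk ⟨kA, gA, hgA⟩
    obtain ⟨l, h, hhw, hhmin⟩ := exists_minWk ⟨kB, gB, hgB⟩
    exact no_two_paths hG hxy hne' hgw hgmin hhw hhmin hxB hyA hAB hnoedge
  -- find a simplicial vertex inside a component
  have key : ∀ (D : Finset V) (p q : V), D = T.filter (fun u => ReachIn G T p u) → p ∈ T →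
      q ∈ S → q ∉ D → q ∉ C → ∃ v ∈ D, SimpIn G S v := by
    intro D p q hD hpT hqS hqD hqC
    have hDT : D ⊆ T := hD ▸ Finset.filter_subset _ _
    have hpD : p ∈ D := hD ▸ Finset.mem_filter.mpr ⟨hpT, Relation.ReflTransGen.refl⟩
    have hclosed : ∀ v ∈ D, ∀ u ∈ S, G.Adj v u → u ∈ D ∪ C := by
      intro v hv u hu hadj
      by_cases huC : u ∈ C
      · exact Finset.mem_union_right _ huC
      · have huT : u ∈ T := Finset.mem_sdiff.mpr ⟨hu, huC⟩
        refine Finset.mem_union_left _ ?_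
        rw [hD]
        refine Finset.mem_filter.mpr ⟨huT, ?_⟩
        have hvr : ReachIn G T p v := (Finset.mem_filter.mp (hD ▸ hv)).2
        exact hvr.tail ⟨hDT hv, huT, hadj⟩
    have hssub : D ∪ C ⊂ S := by
      refine ⟨Finset.union_subset (hDT.trans Finset.sdiff_subset) hCS, fun hcon => ?_⟩
      rcases Finset.mem_union.mp (hcon hqS) with h | h
      exacts [hqD h, hqC h]
    rcases ih (D ∪ C) hssub with hcpl | ⟨v1, hv1, v2, hv2, hvne, hvnadj, hs1, hs2⟩
    · refine ⟨p, hpD, ?_⟩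
      intro a1 ha1 a2 ha2 had1 had2 hne'
      exact hcpl a1 (hclosed p hpD a1 ha1 had1) a2 (hclosed p hpD a2 ha2 had2) hne'
    · have hor : v1 ∈ D ∨ v2 ∈ D := by
        by_contra hcon
        push_neg at hcon
        have h1 : v1 ∈ C := (Finset.mem_union.mp hv1).resolve_left hcon.1
        have h2 : v2 ∈ C := (Finset.mem_union.mp hv2).resolve_left hcon.2
        exact hvnadj (hCclique _ h1 _ h2 hvne)
      have hget : ∃ v ∈ D, SimpIn G (D ∪ C) v := by
        rcases hor with h | h
        exacts [⟨v1, h, hs1⟩, ⟨v2, h, hs2⟩]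
      obtain ⟨v, hvD, hvs⟩ := hget
      refine ⟨v, hvD, ?_⟩
      intro a1 ha1 a2 ha2 had1 had2 hne'
      exact hvs a1 (hclosed v hvD a1 ha1 had1) a2 (hclosed v hvD a2 ha2 had2) had1 had2 hne'
  have hbA : b ∉ A := fun h => hCsep (Finset.mem_filter.mp h).2
  have haB : a ∉ B := fun h => hCsep ((Finset.mem_filter.mp h).2).symm
  obtain ⟨v, hvA, hvsimp⟩ := key A a b rfl haT hb hbA hbC
  obtain ⟨w, hwB, hwsimp⟩ := key B b a rfl hbT ha haB haC
  refine ⟨v, (Finset.mem_sdiff.mp (hAT hvA)).1, w, (Finset.mem_sdiff.mp (hBT hwB)).1,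
    ?_, hnoedge v hvA w hwB, hvsimp, hwsimp⟩
  intro he
  exact hAB v hvA (he ▸ hwB)
lemma exists_simplicial {G : SimpleGraph V} (hG : IsChordal G) {S : Finset V} (hS : S.Nonempty) :
    ∃ v ∈ S, SimpIn G S v := by
  rcases dirac hG S with hcpl | ⟨v, hv, _, _, _, _, hs, _⟩
  · obtain ⟨v, hv⟩ := hS
    exact ⟨v, hv, fun a ha b hb _ _ hne => hcpl a ha b hb hne⟩
  · exact ⟨v, hv, hs⟩

noncomputable def cliquesIn (G : SimpleGraph V) (S : Finset V) : Finset (Finset V) :=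
  S.powerset.filter (fun σ => ∀ u ∈ σ, ∀ w ∈ σ, u ≠ w → G.Adj u w)

lemma mem_cliquesIn {G : SimpleGraph V} {S σ : Finset V} :
    σ ∈ cliquesIn G S ↔ σ ⊆ S ∧ ∀ u ∈ σ, ∀ w ∈ σ, u ≠ w → G.Adj u w := by
  simp [cliquesIn]

lemma bwd {G : SimpleGraph V} (hG : IsChordal G) (S : Finset V) :
    DCollapsible 1 (cliquesIn G S) := by
  induction S using Finset.strongInduction with
  | _ S ih =>
  rcases S.eq_empty_or_nonempty with rfl | hS
  · have hmem0 : ∅ ∈ cliquesIn G ∅ := mem_cliquesIn.mpr ⟨Finset.Subset.refl _, by simp⟩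
    refine Relation.ReflTransGen.single ⟨∅, ⟨by simp, ∅, hmem0, hmem0, Finset.Subset.refl _, ?_⟩, ?_⟩
    · intro η hη _
      exact (mem_cliquesIn.mp hη).1
    · ext η
      simp [collapseAt]
  · obtain ⟨v, hvS, hvsimp⟩ := exists_simplicial hG hS
    set τv := insert v (S.filter (fun u => G.Adj v u)) with hτv
    have hτv_mem : ∀ u, u ∈ τv ↔ u = v ∨ (u ∈ S ∧ G.Adj v u) := by
      intro u; simp [hτv]
    have hτvS : τv ⊆ S := by
      intro u hu
      rcases (hτv_mem u).mp hu with rfl | ⟨h, _⟩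
      exacts [hvS, h]
    have hτvK : τv ∈ cliquesIn G S := by
      refine mem_cliquesIn.mpr ⟨hτvS, ?_⟩
      intro u hu w hw hne
      rcases (hτv_mem u).mp hu with rfl | ⟨huS, hua⟩
      · rcases (hτv_mem w).mp hw with rfl | ⟨hwS, hwa⟩
        · exact absurd rfl hne
        · exact hwa
      · rcases (hτv_mem w).mp hw with rfl | ⟨hwS, hwa⟩
        · exact hua.symm
        · exact hvsimp u huS w hwS hua hwa hne
    have hvK : ({v} : Finset V) ∈ cliquesIn G S := by
      refine mem_cliquesIn.mpr ⟨by simpa using hvS, ?_⟩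
      intro u hu w hw hne
      simp only [Finset.mem_singleton] at hu hw
      exact absurd (hu.trans hw.symm) hne
    have hstep : ElemCollapse 1 (cliquesIn G S) (cliquesIn G (S.erase v)) := by
      refine ⟨{v}, ⟨by simp, τv, hvK, hτvK, ?_, ?_⟩, ?_⟩
      · simp [hτv]
      · intro η hη hvη
        obtain ⟨hηS, hηcl⟩ := mem_cliquesIn.mp hη
        intro u hu
        rw [hτv_mem]
        by_cases he : u = v
        · exact Or.inl he
        · exact Or.inr ⟨hηS hu, hηcl v (hvη (by simp)) u hu (fun h => he h.symm)⟩
      · ext η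
        simp only [collapseAt, Finset.mem_filter, mem_cliquesIn, Finset.singleton_subset_iff]
        constructor
        · rintro ⟨h1, h2⟩
          refine ⟨⟨fun u hu => (Finset.mem_erase.mp (h1 hu)).2, h2⟩, fun hv' => ?_⟩
          exact (Finset.mem_erase.mp (h1 hv')).1 rfl
        · rintro ⟨⟨h1, h2⟩, h3⟩
          exact ⟨fun u hu => Finset.mem_erase.mpr ⟨fun he => h3 (he ▸ hu), h1 hu⟩, h2⟩
    exact Relation.ReflTransGen.head hstep (ih (S.erase v) (Finset.erase_ssubset hvS))
/-- A simplicial complex (with vertex set `V`) is `1`-collapsible iff it is the clique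
complex of a chordal graph on `V`. -/
theorem stmt0 {V : Type*} [DecidableEq V] [Fintype V] (K : Finset (Finset V))
    (hK : IsComplex K) (h0 : ∅ ∈ K) (hv : ∀ v : V, {v} ∈ K) :
    DCollapsible 1 K ↔
      ∃ G : SimpleGraph V, IsChordal G ∧ ∀ σ : Finset V, σ ∈ K ↔ G.IsClique (σ : Set V) := by
  constructor
  · intro hcol
    obtain ⟨hF, hN⟩ := fwd_aux K.card K le_rfl hK hcol h0
    refine ⟨⟨fun u w => u ≠ w ∧ ({u, w} : Finset V) ∈ K, ?_, ?_⟩, ?_, ?_⟩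
    · constructor; rintro u w ⟨h1, h2⟩
      exact ⟨h1.symm, by rwa [Finset.pair_comm]⟩
    · constructor; rintro u ⟨h, _⟩
      exact h rfl
    · rintro n hn ⟨f, hinj, hiff⟩
      exact hN n hn f hinj (fun i j => hiff i j)
    · intro σ
      constructor
      · intro hσ
        rw [SimpleGraph.isClique_iff]
        intro u hu w hw hne
        refine ⟨hne, hK σ hσ {u, w} ?_⟩
        exact Finset.insert_subset_iff.mpr
          ⟨Finset.mem_coe.mp hu, Finset.singleton_subset_iff.mpr (Finset.mem_coe.mp hw)⟩
      · intro hcl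
        apply hF σ (fun u _ => hv u)
        intro u hu w hw hne
        exact (hcl (Finset.mem_coe.mpr hu) (Finset.mem_coe.mpr hw) hne).2
  · rintro ⟨G, hG, hKG⟩
    have hKeq : K = cliquesIn G Finset.univ := by
      ext σ
      rw [hKG, mem_cliquesIn, SimpleGraph.isClique_iff]
      constructor
      · intro h
        exact ⟨Finset.subset_univ _, fun u hu w hw hne =>
          h (Finset.mem_coe.mpr hu) (Finset.mem_coe.mpr hw) hne⟩
      · rintro ⟨_, h⟩
        intro u hu w hw hne
        exact h u (Finset.mem_coe.mp hu) w (Finset.mem_coe.mp hw) hne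
    rw [hKeq]
    exact bwd hG Finset.univ
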